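/- arXiv:0906.3051 — 3 statements merged into one kernel-verified Lean document; each statement's English description precedes it below -/
import Mathlib

section
/- The class of semilinear subsets of ℕ^n is closed under intersection. -/
/-- A subset of a commutative monoid (e.g. ℕ^n) is *linear* if it is of the form
`{α₀ + a₁•α₁ + ⋯ + a_m•α_m : a₁,…,a_m ∈ ℕ}`. -/
def IsLinearSet' {M : Type*} [AddCommMonoid M] (P : Set M) : Prop :=
  ∃ (m : ℕ) (α₀ : M) (α : Fin m → M),
    P = {β | ∃ a : Fin m → ℕ, β = α₀ + ∑ i, a i • α i}

/-- A set is *semilinear* if it is a finite union of linear sets. -/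
def IsSemilinearSet' {M : Type*} [AddCommMonoid M] (P : Set M) : Prop :=
  ∃ (k : ℕ) (L : Fin k → Set M), (∀ i, IsLinearSet' (L i)) ∧ P = ⋃ i, L i

namespace SemilinearAux

theorem pi_isPWO {d : ℕ} (s : Set (Fin d → ℕ)) : s.IsPWO := by
  have h : IsWellOrder ℕ (· < ·) := inferInstance
  exact Set.isPWO_of_wellQuasiOrderedLE s

theorem exists_minimal {d : ℕ} (S : Set (Fin d → ℕ)) :
    ∀ x ∈ S, ∃ p, (p ∈ S ∧ ∀ y ∈ S, y ≤ p → y = p) ∧ p ≤ x := by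
  have key : ∀ N : ℕ, ∀ x ∈ S, (∑ i, x i) ≤ N →
      ∃ p, (p ∈ S ∧ ∀ y ∈ S, y ≤ p → y = p) ∧ p ≤ x := by
    intro N
    induction N with
    | zero =>
      intro x hx hw
      refine ⟨x, ⟨hx, fun y _ hyx => ?_⟩, le_refl x⟩
      have hx0 : ∀ i, x i = 0 := fun i =>
        Nat.le_zero.mp (le_trans
          (Finset.single_le_sum (fun j _ => Nat.zero_le (x j)) (Finset.mem_univ i)) hw)
      funext i
      have := hyx i
      rw [hx0 i] at this ⊢
      exact Nat.le_zero.mp this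
    | succ N ih =>
      intro x hx hw
      by_cases h : ∀ y ∈ S, y ≤ x → y = x
      · exact ⟨x, ⟨hx, h⟩, le_refl x⟩
      · push_neg at h
        obtain ⟨y, hyS, hyx, hne⟩ := h
        have hlt : ∑ i, y i < ∑ i, x i := by
          refine Finset.sum_lt_sum (fun i _ => hyx i) ?_
          by_contra hc
          push_neg at hc
          exact hne (funext fun i =>
            le_antisymm (hyx i) (hc i (Finset.mem_univ i)))
        obtain ⟨p, hp, hpy⟩ := ih y hyS (by omega)
        exact ⟨p, hp, hpy.trans hyx⟩
  intro x hx
  exact key (∑ i, x i) x hx le_rfl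

theorem minimals_finite {d : ℕ} (S : Set (Fin d → ℕ)) :
    {x | x ∈ S ∧ ∀ y ∈ S, y ≤ x → y = x}.Finite := by
  refine IsAntichain.finite_of_partiallyWellOrderedOn (r := (· ≤ ·)) ?_ (pi_isPWO _)
  intro a ha b hb hne hab
  exact hne (hb.2 a ha.1 hab)

theorem map_split {d n : ℕ} (F : (Fin d → ℕ) →+ (Fin n → ℕ)) {p s : Fin d → ℕ}
    (h : p ≤ s) : F s = F p + F (s - p) := by
  rw [← map_add, add_tsub_cancel_of_le h]

/-- Hilbert basis for the homogeneous solution monoid. -/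
theorem hilbert_basis {d n : ℕ} (F G : (Fin d → ℕ) →+ (Fin n → ℕ)) :
    ∃ (m : ℕ) (h : Fin m → (Fin d → ℕ)),
      (∀ j, F (h j) = G (h j)) ∧
      ∀ x, F x = G x → ∃ a : Fin m → ℕ, x = ∑ j, a j • h j := by
  set H' : Set (Fin d → ℕ) := {x | F x = G x ∧ x ≠ 0} with hH'
  obtain ⟨m, e, he⟩ := (minimals_finite H').fin_embedding
  refine ⟨m, fun j => e j, ?_, ?_⟩
  · intro j
    have : (e j) ∈ {x | x ∈ H' ∧ ∀ y ∈ H', y ≤ x → y = x} := by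
      rw [← he]; exact Set.mem_range_self j
    exact this.1.1
  · have key : ∀ N : ℕ, ∀ x, F x = G x → (∑ i, x i) ≤ N →
        ∃ a : Fin m → ℕ, x = ∑ j, a j • (e j : Fin d → ℕ) := by
      intro N
      induction N with
      | zero =>
        intro x _ hw
        have hx0 : x = 0 := funext fun i =>
          Nat.le_zero.mp (le_trans
            (Finset.single_le_sum (fun j _ => Nat.zero_le (x j)) (Finset.mem_univ i)) hw)
        exact ⟨0, by simp [hx0]⟩
      | succ N ih =>
        intro x hx hw
        by_cases hx0 : x = 0
        · exact ⟨0, by simp [hx0]⟩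
        · obtain ⟨q, hqmem, hqx⟩ := exists_minimal H' x ⟨hx, hx0⟩
          have hqH : F q = G q := hqmem.1.1
          have hq0 : q ≠ 0 := hqmem.1.2
          have hqrange : q ∈ Set.range (fun j => (e j : Fin d → ℕ)) := by
            have : q ∈ Set.range e := by rw [he]; exact hqmem
            simpa using this
          obtain ⟨j₀, hj₀⟩ := hqrange
          have hsub : F (x - q) = G (x - q) := by
            have h1 := map_split F hqx
            have h2 := map_split G hqx
            rw [hx, h2, hqH] at h1
            exact (add_left_cancel h1).symm
          have hsum : ∑ i, q i + ∑ i, (x - q) i = ∑ i, x i := by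
            rw [← Finset.sum_add_distrib]
            exact Finset.sum_congr rfl fun i _ => by
              have := congrFun (add_tsub_cancel_of_le hqx) i
              simpa using this
          have hqpos : 0 < ∑ i, q i := by
            rcases Nat.eq_zero_or_pos (∑ i, q i) with h0 | h0
            · exfalso
              apply hq0
              funext i
              exact Nat.le_zero.mp (le_trans
                (Finset.single_le_sum (fun j _ => Nat.zero_le (q j)) (Finset.mem_univ i))
                h0.le)
            · exact h0
          obtain ⟨a, ha⟩ := ih (x - q) hsub (by omega)
          refine ⟨a + Pi.single j₀ 1, ?_⟩
          have hsingle : ∑ j, (Pi.single (M := fun _ => ℕ) j₀ 1 j) • (e j : Fin d → ℕ) = e j₀ := by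
            rw [Finset.sum_eq_single j₀]
            · simp
            · intro b _ hb; simp [Pi.single_eq_of_ne hb]
            · simp
          have : ∑ j, ((a + Pi.single (M := fun _ => ℕ) j₀ 1) j) • (e j : Fin d → ℕ)
              = (∑ j, a j • (e j : Fin d → ℕ)) + e j₀ := by
            rw [← hsingle, ← Finset.sum_add_distrib]
            exact Finset.sum_congr rfl fun j _ => by rw [Pi.add_apply, add_smul]
          have hj₀' : (e j₀ : Fin d → ℕ) = q := hj₀
          rw [this, ← ha, hj₀', add_comm]
          exact (add_tsub_cancel_of_le hqx).symm
    intro x hx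
    exact key (∑ i, x i) x hx le_rfl

theorem solutionSet_semilinear {d n : ℕ} (F G : (Fin d → ℕ) →+ (Fin n → ℕ))
    (u v : Fin n → ℕ) :
    IsSemilinearSet' {x : Fin d → ℕ | u + F x = v + G x} := by
  set S : Set (Fin d → ℕ) := {x | u + F x = v + G x} with hSdef
  obtain ⟨m, h, hhom, hgen⟩ := hilbert_basis F G
  obtain ⟨k, p, hp⟩ := (minimals_finite S).fin_embedding
  refine ⟨k, fun i => {β | ∃ a : Fin m → ℕ, β = p i + ∑ j, a j • h j},
    fun i => ⟨m, p i, h, rfl⟩, ?_⟩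
  ext x
  simp only [Set.mem_iUnion, Set.mem_setOf_eq]
  constructor
  · intro hx
    obtain ⟨q, hqmem, hqx⟩ := exists_minimal S x hx
    have : q ∈ Set.range p := by rw [hp]; exact hqmem
    obtain ⟨i, rfl⟩ := this
    have hpiS : u + F (p i) = v + G (p i) := hqmem.1
    have hsub : F (x - p i) = G (x - p i) := by
      have h1 := map_split F hqx
      have h2 := map_split G hqx
      have e1 : (u + F (p i)) + F (x - p i) = (v + G (p i)) + G (x - p i) := by
        rw [add_assoc, ← h1, add_assoc, ← h2]; exact hx
      rw [hpiS] at e1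
      exact add_left_cancel e1
    obtain ⟨a, ha⟩ := hgen (x - p i) hsub
    exact ⟨i, a, by rw [← ha]; exact (add_tsub_cancel_of_le hqx).symm⟩
  · rintro ⟨i, a, rfl⟩
    have hpiS : u + F (p i) = v + G (p i) := by
      have : (p i : Fin d → ℕ) ∈ {x | x ∈ S ∧ ∀ y ∈ S, y ≤ x → y = x} := by
        rw [← hp]; exact Set.mem_range_self i
      exact this.1
    have hw : F (∑ j, a j • h j) = G (∑ j, a j • h j) := by
      rw [map_sum, map_sum]
      exact Finset.sum_congr rfl fun j _ => by rw [map_nsmul, map_nsmul, hhom j]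
    show u + F (p i + ∑ j, a j • h j) = v + G (p i + ∑ j, a j • h j)
    rw [map_add, map_add, ← add_assoc, ← add_assoc, hpiS, hw]

theorem semilinear_image {d n : ℕ} (F : (Fin d → ℕ) →+ (Fin n → ℕ)) (c : Fin n → ℕ)
    {S : Set (Fin d → ℕ)} (hS : IsSemilinearSet' S) :
    IsSemilinearSet' ((fun x => c + F x) '' S) := by
  obtain ⟨k, L, hL, rfl⟩ := hS
  rw [Set.image_iUnion]
  refine ⟨k, _, fun i => ?_, rfl⟩
  obtain ⟨m, p, h, hLi⟩ := hL i
  refine ⟨m, c + F p, fun j => F (h j), ?_⟩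
  rw [hLi]
  ext γ
  simp only [Set.mem_image, Set.mem_setOf_eq]
  have hcalc : ∀ a : Fin m → ℕ,
      c + F (p + ∑ j, a j • h j) = (c + F p) + ∑ j, a j • F (h j) := by
    intro a
    rw [map_add, map_sum, ← add_assoc]
    congr 1
    exact Finset.sum_congr rfl fun j _ => by rw [map_nsmul]
  constructor
  · rintro ⟨β, ⟨a, rfl⟩, rfl⟩
    exact ⟨a, (hcalc a)⟩
  · rintro ⟨a, rfl⟩
    exact ⟨p + ∑ j, a j • h j, ⟨a, rfl⟩, hcalc a⟩

theorem semilinear_empty {M : Type*} [AddCommMonoid M] : IsSemilinearSet' (∅ : Set M) :=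
  ⟨0, fun i => i.elim0, fun i => i.elim0, by simp⟩

theorem semilinear_union {M : Type*} [AddCommMonoid M] {S T : Set M}
    (hS : IsSemilinearSet' S) (hT : IsSemilinearSet' T) : IsSemilinearSet' (S ∪ T) := by
  obtain ⟨k, L, hL, rfl⟩ := hS
  obtain ⟨k', L', hL', rfl⟩ := hT
  refine ⟨k + k', fun i => Fin.addCases (motive := fun _ => Set M) L L' i, ?_, ?_⟩
  · intro i
    refine Fin.addCases (motive := fun i =>
      IsLinearSet' (Fin.addCases (motive := fun _ => Set M) L L' i)) ?_ ?_ i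
    · intro j; simpa using hL j
    · intro j; simpa using hL' j
  · ext x
    simp only [Set.mem_union, Set.mem_iUnion]
    constructor
    · rintro (⟨i, hi⟩ | ⟨i, hi⟩)
      · exact ⟨Fin.castAdd k' i, by simpa using hi⟩
      · exact ⟨Fin.natAdd k i, by simpa using hi⟩
    · rintro ⟨i, hi⟩
      refine Fin.addCases (motive := fun i =>
        x ∈ Fin.addCases (motive := fun _ => Set M) L L' i →
          (∃ i, x ∈ L i) ∨ ∃ i, x ∈ L' i) ?_ ?_ i hi
      · intro j hj; left; exact ⟨j, by simpa using hj⟩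
      · intro j hj; right; exact ⟨j, by simpa using hj⟩

theorem semilinear_iUnion {M : Type*} [AddCommMonoid M] :
    ∀ {k : ℕ} (T : Fin k → Set M),
      (∀ i, IsSemilinearSet' (T i)) → IsSemilinearSet' (⋃ i, T i) := by
  intro k
  induction k with
  | zero => intro T _; simpa using semilinear_empty
  | succ k ih =>
    intro T hT
    have : ⋃ i, T i = T 0 ∪ ⋃ i : Fin k, T i.succ := by
      ext x
      simp only [Set.mem_iUnion, Set.mem_union]
      exact Fin.exists_fin_succ
    rw [this]
    exact semilinear_union (hT 0) (ih _ fun i => hT i.succ)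

theorem linear_inter {n : ℕ} {P Q : Set (Fin n → ℕ)}
    (hP : IsLinearSet' P) (hQ : IsLinearSet' Q) : IsSemilinearSet' (P ∩ Q) := by
  obtain ⟨m, α₀, α, rfl⟩ := hP
  obtain ⟨m', β₀, β, rfl⟩ := hQ
  let F : (Fin (m + m') → ℕ) →+ (Fin n → ℕ) :=
  { toFun := fun x => ∑ i, x (Fin.castAdd m' i) • α i
    map_zero' := by simp
    map_add' := fun x y => by simp [add_smul, Finset.sum_add_distrib]  }
  let G : (Fin (m + m') → ℕ) →+ (Fin n → ℕ) :=
  { toFun := fun x => ∑ j, x (Fin.natAdd m j) • β j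
    map_zero' := by simp
    map_add' := fun x y => by simp [add_smul, Finset.sum_add_distrib]  }
  have hFx : ∀ x : Fin (m + m') → ℕ, F x = ∑ i, x (Fin.castAdd m' i) • α i := fun _ => rfl
  have hGx : ∀ x : Fin (m + m') → ℕ, G x = ∑ j, x (Fin.natAdd m j) • β j := fun _ => rfl
  have himg : {β' | ∃ a : Fin m → ℕ, β' = α₀ + ∑ i, a i • α i} ∩
        {β' | ∃ b : Fin m' → ℕ, β' = β₀ + ∑ j, b j • β j}
      = (fun x => α₀ + F x) '' {x | α₀ + F x = β₀ + G x} := by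
    ext γ
    simp only [Set.mem_inter_iff, Set.mem_setOf_eq, Set.mem_image]
    constructor
    · rintro ⟨⟨a, rfl⟩, ⟨b, hb⟩⟩
      set x : Fin (m + m') → ℕ := fun i2 => Fin.addCases (motive := fun _ => ℕ) a b i2
        with hxdef
      have hF : F x = ∑ i, a i • α i := by
        rw [hFx]
        exact Finset.sum_congr rfl fun i _ => by simp [hxdef]
      have hG : G x = ∑ j, b j • β j := by
        rw [hGx]
        exact Finset.sum_congr rfl fun j _ => by simp [hxdef]
      refine ⟨x, ?_, ?_⟩
      · show α₀ + F x = β₀ + G x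
        rw [hF, hG]; exact hb
      · rw [hF]
    · rintro ⟨x, hx, rfl⟩
      constructor
      · exact ⟨fun i => x (Fin.castAdd m' i), by rw [hFx]⟩
      · refine ⟨fun j => x (Fin.natAdd m j), ?_⟩
        have : α₀ + F x = β₀ + G x := hx
        rw [this, hGx]
  rw [himg]
  exact semilinear_image F α₀ (solutionSet_semilinear F G α₀ β₀)

end SemilinearAux

/-- The class of semilinear subsets of ℕ^n is closed under intersection. -/
theorem semilinear_inter {n : ℕ} (P Q : Set (Fin n → ℕ))
    (hP : IsSemilinearSet' P) (hQ : IsSemilinearSet' Q) :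
    IsSemilinearSet' (P ∩ Q) := by
  obtain ⟨k, L, hL, rfl⟩ := hP
  obtain ⟨k', L', hL', rfl⟩ := hQ
  rw [Set.iUnion_inter]
  refine SemilinearAux.semilinear_iUnion _ fun i => ?_
  rw [Set.inter_iUnion]
  exact SemilinearAux.semilinear_iUnion _ fun j =>
    SemilinearAux.linear_inter (hL i) (hL' j)
end

section
/- Every semilinear subset of ℕ^n is the Parikh image of a regular language, and hence membership in a semilinear set (given by its presentation) is decidable. -/
/-- The Parikh vector of a word over an `n`-letter alphabet: the count of each letter. -/
def parikh {n : ℕ} (w : List (Fin n)) : Fin n → ℕ := fun i => w.count i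

namespace ParikhAux



/-- generic NFA lemmas -/
lemma evalFrom_append {α σ : Type*} (M : NFA α σ) (S : Set σ) (x y : List α) :
    M.evalFrom S (x ++ y) = M.evalFrom (M.evalFrom S x) y :=
  List.foldl_append

lemma evalFrom_mono {α σ : Type*} (M : NFA α σ) :
    ∀ (w : List α) {S S' : Set σ}, S ⊆ S' → M.evalFrom S w ⊆ M.evalFrom S' w := by
  intro w
  induction w with
  | nil => intro S S' h; simpa using h
  | cons a w ih =>
    intro S S' h
    have hs : M.stepSet S a ⊆ M.stepSet S' a := by
      intro p hp
      rw [NFA.mem_stepSet] at hp ⊢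
      obtain ⟨q, hq, hp⟩ := hp
      exact ⟨q, h hq, hp⟩
    exact ih hs

lemma stepSet_singleton {α σ : Type*} (M : NFA α σ) (q : σ) (a : α) :
    M.stepSet {q} a = M.step q a := by
  simp [NFA.stepSet]

lemma mem_evalFrom_iff {α σ : Type*} (M : NFA α σ) :
    ∀ (w : List α) (S : Set σ) (p : σ),
      p ∈ M.evalFrom S w ↔ ∃ q ∈ S, p ∈ M.evalFrom {q} w := by
  intro w
  induction w with
  | nil => intro S p; simp [eq_comm]
  | cons a w ih =>
    intro S p
    have h1 : ∀ S', M.evalFrom S' (a :: w) = M.evalFrom (M.stepSet S' a) w := fun _ => rfl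
    rw [h1, ih]
    constructor
    · rintro ⟨r, hr, hp⟩
      rw [NFA.mem_stepSet] at hr
      obtain ⟨q, hq, hr⟩ := hr
      refine ⟨q, hq, ?_⟩
      rw [h1, stepSet_singleton, ih]
      exact ⟨r, hr, hp⟩
    · rintro ⟨q, hq, hp⟩
      rw [h1, stepSet_singleton, ih] at hp
      obtain ⟨r, hr, hp⟩ := hp
      exact ⟨r, NFA.mem_stepSet.2 ⟨q, hq, hr⟩, hp⟩

section Construction

variable {n k : ℕ} {m : Fin k → ℕ}

/-- The state space: pairs (component, remaining suffix of current block). -/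
def T (u : Fin k → List (Fin n)) (v : ∀ j, Fin (m j) → List (Fin n)) :
    Finset (Fin k × List (Fin n)) :=
  Finset.univ.biUnion fun j =>
    (((u j).tails.toFinset ∪ Finset.univ.biUnion fun i => (v j i).tails.toFinset).image
      fun l => (j, l))

lemma mem_T {u : Fin k → List (Fin n)} {v : ∀ j, Fin (m j) → List (Fin n)}
    {j : Fin k} {l : List (Fin n)} :
    (j, l) ∈ T u v ↔ l <:+ u j ∨ ∃ i, l <:+ v j i := by
  constructor
  · intro h
    simp only [T, Finset.mem_biUnion, Finset.mem_univ, Finset.mem_image, Finset.mem_union,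
      List.mem_toFinset, List.mem_tails, true_and] at h
    obtain ⟨j', l', h, heq⟩ := h
    injection heq with h1 h2
    subst h1; subst h2
    exact h
  · intro h
    simp only [T, Finset.mem_biUnion, Finset.mem_univ, Finset.mem_image, Finset.mem_union,
      List.mem_toFinset, List.mem_tails, true_and]
    exact ⟨j, l, h, rfl⟩

variable (u : Fin k → List (Fin n)) (v : ∀ j, Fin (m j) → List (Fin n))

def mkNFA : NFA (Fin n) {x // x ∈ T u v} where
  step q a := {p | p.val.1 = q.val.1 ∧
    ((q.val.2 = [] ∧ ∃ i, v q.val.1 i = a :: p.val.2) ∨ q.val.2 = a :: p.val.2)}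
  start := {q | ∃ j, q.val = (j, u j)}
  accept := {q | q.val.2 = []}

/-- The `(j, [])` state. -/
def nilSt (j : Fin k) : {x // x ∈ T u v} :=
  ⟨(j, []), mem_T.2 (Or.inl List.nil_suffix)⟩

lemma run_self : ∀ (l : List (Fin n)) (q : {x // x ∈ T u v}), q.val.2 = l →
    nilSt u v q.val.1 ∈ (mkNFA u v).evalFrom {q} l := by
  intro l
  induction l with
  | nil =>
    intro q hq
    simp only [NFA.evalFrom_nil, Set.mem_singleton_iff]
    apply Subtype.ext
    exact Prod.ext rfl hq.symm
  | cons a l ih =>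
    intro q hq
    have hmem : (q.val.1, l) ∈ T u v := by
      have h := mem_T.1 (show ((q : Fin k × List (Fin n)).1, (q : Fin k × List (Fin n)).2) ∈ T u v from q.2)
      have hl : l <:+ q.val.2 := hq ▸ ⟨[a], rfl⟩
      rcases h with h | ⟨i, h⟩
      · exact mem_T.2 (Or.inl (hl.trans h))
      · exact mem_T.2 (Or.inr ⟨i, hl.trans h⟩)
    set q' : {x // x ∈ T u v} := ⟨(q.val.1, l), hmem⟩ with hq'
    have hstep : q' ∈ (mkNFA u v).step q a := ⟨rfl, Or.inr (by rw [hq])⟩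
    have h1 : (mkNFA u v).evalFrom {q} (a :: l) =
        (mkNFA u v).evalFrom ((mkNFA u v).stepSet {q} a) l := rfl
    rw [h1, stepSet_singleton]
    have := ih q' rfl
    exact evalFrom_mono _ l (Set.singleton_subset_iff.2 hstep) this

lemma run_block (j : Fin k) (i : Fin (m j)) :
    nilSt u v j ∈ (mkNFA u v).evalFrom {nilSt u v j} (v j i) := by
  rcases hvi : v j i with _ | ⟨a, l⟩
  · simp
  · have hmem : (j, l) ∈ T u v := mem_T.2 (Or.inr ⟨i, hvi ▸ ⟨[a], rfl⟩⟩)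
    set q' : {x // x ∈ T u v} := ⟨(j, l), hmem⟩ with hq'
    have hstep : q' ∈ (mkNFA u v).step (nilSt u v j) a :=
      ⟨rfl, Or.inl ⟨rfl, ⟨i, hvi⟩⟩⟩
    have h1 : (mkNFA u v).evalFrom {nilSt u v j} (a :: l) =
        (mkNFA u v).evalFrom ((mkNFA u v).stepSet {nilSt u v j} a) l := rfl
    rw [h1, stepSet_singleton]
    exact evalFrom_mono _ l (Set.singleton_subset_iff.2 hstep) (run_self u v l q' rfl)

lemma run_blocks : ∀ (bs : List (List (Fin n))) (j : Fin k),
    (∀ b ∈ bs, ∃ i, b = v j i) →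
    nilSt u v j ∈ (mkNFA u v).evalFrom {nilSt u v j} bs.flatten := by
  intro bs
  induction bs with
  | nil => intro j _; simp
  | cons b bs ih =>
    intro j hb
    obtain ⟨i, rfl⟩ := hb b List.mem_cons_self
    have h1 := run_block u v j i
    have h2 := ih j (fun b hb' => hb b (List.mem_cons_of_mem _ hb'))
    rw [List.flatten_cons, evalFrom_append]
    exact evalFrom_mono _ _ (Set.singleton_subset_iff.2 h1) h2

lemma run_back : ∀ (w : List (Fin n)) (q p : {x // x ∈ T u v}),
    p ∈ (mkNFA u v).evalFrom {q} w → p.val.2 = [] →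
    ∃ bs : List (List (Fin n)), w = q.val.2 ++ bs.flatten ∧ ∀ b ∈ bs, ∃ i, b = v q.val.1 i := by
  intro w
  induction w with
  | nil =>
    intro q p hp hacc
    simp only [NFA.evalFrom_nil, Set.mem_singleton_iff] at hp
    subst hp
    exact ⟨[], by simp [hacc], by simp⟩
  | cons a w ih =>
    intro q p hp hacc
    have h1 : (mkNFA u v).evalFrom {q} (a :: w) =
        (mkNFA u v).evalFrom ((mkNFA u v).stepSet {q} a) w := rfl
    rw [h1, stepSet_singleton, mem_evalFrom_iff] at hp
    obtain ⟨r, ⟨hj, hstep⟩, hp⟩ := hp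
    obtain ⟨bs', hw, hbs'⟩ := ih r p hp hacc
    rw [hj] at hbs'
    rcases hstep with ⟨hqnil, i, hvi⟩ | hcons
    · refine ⟨(a :: r.val.2) :: bs', ?_, ?_⟩
      · simp [hqnil, hw]
      · intro b hb
        rcases List.mem_cons.1 hb with rfl | hb
        · exact ⟨i, hvi.symm⟩
        · exact hbs' b hb
    · exact ⟨bs', by simp [hcons, hw], hbs'⟩

lemma accepts_mkNFA :
    (mkNFA u v).accepts = {w | ∃ (j : Fin k) (bs : List (List (Fin n))),
      w = u j ++ bs.flatten ∧ ∀ b ∈ bs, ∃ i, b = v j i} := by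
  ext w
  rw [NFA.mem_accepts]
  constructor
  · rintro ⟨p, hacc, hp⟩
    rw [mem_evalFrom_iff] at hp
    obtain ⟨q, ⟨j, hq⟩, hp⟩ := hp
    obtain ⟨bs, hw, hbs⟩ := run_back u v w q p hp hacc
    have hq1 : (q : Fin k × List (Fin n)).1 = j := by rw [hq]
    have hq2 : (q : Fin k × List (Fin n)).2 = u j := by rw [hq]
    rw [hq1] at hbs
    rw [hq2] at hw
    exact ⟨j, bs, hw, hbs⟩
  · rintro ⟨j, bs, rfl, hbs⟩
    have hq0 : ((j, u j) : Fin k × List (Fin n)) ∈ T u v :=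
      mem_T.2 (Or.inl (List.suffix_refl _))
    set q0 : {x // x ∈ T u v} := ⟨(j, u j), hq0⟩ with hq0'
    refine ⟨nilSt u v j, rfl, ?_⟩
    rw [mem_evalFrom_iff]
    refine ⟨q0, ⟨j, rfl⟩, ?_⟩
    rw [evalFrom_append]
    have h1 : nilSt u v j ∈ (mkNFA u v).evalFrom {q0} (u j) := run_self u v (u j) q0 rfl
    exact evalFrom_mono _ _ (Set.singleton_subset_iff.2 h1) (run_blocks u v bs j hbs)

end Construction



open List

/-- The canonical word with a given count vector. -/
def word {m : ℕ} (x : Fin m → ℕ) : List (Fin m) :=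
  (List.ofFn fun i => List.replicate (x i) i).flatten

lemma count_word {m : ℕ} (x : Fin m → ℕ) (i : Fin m) : (word x).count i = x i := by
  simp [word, List.count_flatten, List.sum_ofFn, Function.comp, List.count_replicate,
    Finset.sum_ite_eq]

lemma parikh_append {n : ℕ} (u v : List (Fin n)) :
    parikh (u ++ v) = parikh u + parikh v := by
  funext i; simp [parikh, List.count_append]

lemma parikh_word {n : ℕ} (x : Fin n → ℕ) : parikh (word x) = x :=
  funext (count_word x)

lemma parikh_flatten {n : ℕ} (L : List (List (Fin n))) :
    parikh L.flatten = (L.map parikh).sum := by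
  induction L with
  | nil => funext i; simp [parikh]
  | cons b L ih => simp [List.flatten, parikh_append, ih]

lemma sum_map_eq {m : ℕ} {M : Type*} [AddCommMonoid M] (g : Fin m → M) (is : List (Fin m)) :
    (is.map g).sum = ∑ i, is.count i • g i := by
  induction is with
  | nil => simp
  | cons a is ih =>
    simp only [List.map_cons, List.sum_cons, ih, List.count_cons, beq_iff_eq,
      add_smul, Finset.sum_add_distrib, ite_smul, one_smul, zero_smul,
      Finset.sum_ite_eq', Finset.sum_ite_eq, Finset.mem_univ, if_true]
    abel



lemma blocks_to_indices {β ι : Type*} (g : ι → β) :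
    ∀ (bs : List β), (∀ b ∈ bs, ∃ i, b = g i) → ∃ is : List ι, bs = is.map g := by
  intro bs
  induction bs with
  | nil => intro _; exact ⟨[], rfl⟩
  | cons b bs ih =>
    intro h
    obtain ⟨i, rfl⟩ := h b List.mem_cons_self
    obtain ⟨is, rfl⟩ := ih (fun b hb => h b (List.mem_cons_of_mem _ hb))
    exact ⟨i :: is, rfl⟩


end ParikhAux

open ParikhAux in
/-- Every semilinear subset of ℕ^n is the Parikh image of a regular language (one accepted
by a DFA with finitely many states), and hence membership in a semilinear set is decidable. -/
theorem semilinear_is_parikh_image_of_regular {n : ℕ} (P : Set (Fin n → ℕ))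
    (hP : IsSemilinearSet' P) :
    (∃ (σ : Type) (_ : Fintype σ) (M : DFA (Fin n) σ),
        {v | ∃ w ∈ M.accepts, parikh w = v} = P) ∧
      ∃ f : (Fin n → ℕ) → Bool, ∀ v, f v = true ↔ v ∈ P := by
  obtain ⟨k, L, hlin, rfl⟩ := hP
  choose m α₀ α hL using hlin
  set u : Fin k → List (Fin n) := fun j => word (α₀ j) with hu
  set v : ∀ j, Fin (m j) → List (Fin n) := fun j i => word (α j i) with hv
  constructor
  · refine ⟨Set {x // x ∈ T u v}, inferInstance, (mkNFA u v).toDFA, ?_⟩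
    ext β
    simp only [Set.mem_setOf_eq, NFA.toDFA_correct, accepts_mkNFA, Set.mem_iUnion]
    constructor
    · rintro ⟨w, ⟨j, bs, rfl, hbs⟩, rfl⟩
      obtain ⟨is, rfl⟩ := blocks_to_indices (v j) bs hbs
      refine ⟨j, ?_⟩
      rw [hL j]
      refine ⟨fun i => is.count i, ?_⟩
      rw [parikh_append, parikh_flatten, List.map_map]
      have : (parikh ∘ v j) = α j := funext fun i => parikh_word (α j i)
      rw [this, hu, parikh_word, sum_map_eq]
    · rintro ⟨j, hβ⟩
      rw [hL j] at hβ
      obtain ⟨a, rfl⟩ := hβ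
      refine ⟨u j ++ ((word a).map (v j)).flatten,
        ⟨j, (word a).map (v j), rfl, fun b hb => ?_⟩, ?_⟩
      · obtain ⟨i, _, rfl⟩ := List.mem_map.1 hb
        exact ⟨i, rfl⟩
      · rw [parikh_append, parikh_flatten, List.map_map]
        have : (parikh ∘ v j) = α j := funext fun i => parikh_word (α j i)
        rw [this, hu, parikh_word, sum_map_eq]
        congr 1
        exact Finset.sum_congr rfl fun i _ => by rw [count_word]
  · classical
    exact ⟨fun β => decide (β ∈ ⋃ i, L i), fun β => by simp⟩
end

section
/- If a class of automata has a decidable word (membership) problem and an effectively enumerable set of descriptors, and there exists a minimization algorithm producing, from any automaton of the class, an equivalent automaton of the same class with a minimal number of states, and additionally equivalence of minimal automata is decidable up to renaming of states (finitely many automata with a given number of states over a given alphabet), then the emptiness problem for the class is decidable. Consequently, if emptiness is not semi-decidable for the class, no such minimization algorithm exists. -/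
/-- Membership in a fixed list of naturals is a primitive recursive predicate. -/
private lemma primrecPred_mem_fixed_list (l : List ℕ) :
    PrimrecPred (fun m : ℕ => m ∈ l) := by
  induction l with
  | nil =>
      have h : Primrec (fun _ : ℕ => false) := Primrec.const false
      unfold PrimrecPred
      simpa using h
  | cons a l ih =>
      have h : PrimrecPred (fun m : ℕ => m = a ∨ m ∈ l) :=
        PrimrecPred.or (Primrec.eq.comp .id (.const a)) ih
      simpa [List.mem_cons] using h

/-- If a class of automata (coded as natural numbers) has a decidable word problem
(`eval`), effectively listable finitely many automata per state count (`enum`), an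
automaton accepting the empty language, a computable minimization algorithm producing
equivalent automata with minimal state count, and decidable equivalence of minimal
automata, then its emptiness problem is decidable.  (Consequently, for classes whose
emptiness problem is not semi-decidable, no such minimization algorithm can exist.) -/
theorem minimization_gives_decidable_emptiness
    (eval : ℕ → ℕ → Bool) (heval : Computable₂ eval)
    (states : ℕ → ℕ) (hstates : Computable states)
    (enum : ℕ → List ℕ) (henum : Computable enum)
    (henumspec : ∀ A : ℕ, A ∈ enum (states A))
    (e₀ : ℕ) (he₀ : ∀ w, eval e₀ w = false)
    (minimize : ℕ → ℕ) (hmin : Computable minimize)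
    (hminEquiv : ∀ A w, eval (minimize A) w = eval A w)
    (hminMinimal : ∀ A B : ℕ, (∀ w, eval B w = eval A w) →
      states (minimize A) ≤ states B)
    (eqd : ℕ → ℕ → Bool) (heqd : Computable₂ eqd)
    (heqdspec : ∀ A B : ℕ, minimize A = A → minimize B = B →
      (eqd A B = true ↔ ∀ w, eval A w = eval B w)) :
    ComputablePred (fun A : ℕ => {w : ℕ | eval A w = true} = ∅) := by
  classical
  -- the (finitely many) minimal automata accepting the empty language,
  -- hardcoded (non-uniformly) into the decision procedure
  set n₀ : ℕ := states (minimize e₀) with hn₀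
  set E : List ℕ := (enum n₀).filter (fun B => decide (∀ w, eval B w = false))
    with hE
  rw [ComputablePred.computable_iff]
  refine ⟨fun A => decide (minimize A ∈ E), ?_, ?_⟩
  · exact ((primrecPred_mem_fixed_list E).decide.to_comp).comp hmin
  · funext A
    apply propext
    rw [decide_eq_true_iff]
    constructor
    · intro h
      have hempty : ∀ w, eval A w = false := by
        intro w
        by_contra hw
        have : w ∈ ({w : ℕ | eval A w = true} : Set ℕ) := by
          simpa using eq_true_of_ne_false hw
        simp [h] at this
      have hminA : ∀ w, eval (minimize A) w = false := fun w => by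
        rw [hminEquiv]; exact hempty w
      have h1 : states (minimize A) ≤ n₀ := by
        refine hminMinimal A (minimize e₀) (fun w => ?_)
        rw [hminEquiv, he₀, hempty]
      have h2 : n₀ ≤ states (minimize A) := by
        refine hminMinimal e₀ (minimize A) (fun w => ?_)
        rw [hminEquiv, he₀, hempty]
      have hst : states (minimize A) = n₀ := le_antisymm h1 h2
      rw [hE]
      refine List.mem_filter.2 ⟨?_, by simpa using hminA⟩
      rw [← hst]; exact henumspec (minimize A)
    · intro h
      have := (List.mem_filter.1 (hE ▸ h)).2
      have hminA : ∀ w, eval (minimize A) w = false := by simpa using this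
      ext w
      simp only [Set.mem_setOf_eq, Set.mem_empty_iff_false, iff_false]
      intro hw
      have := hminA w
      rw [hminEquiv] at this
      rw [hw] at this
      simp at this
end
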